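/- For all x ∈ M and y ∈ N, the identity (1 − t)( Σ_{k=0}^{p−2} ((s − s_k)x) ⊗ t^k y ) = (sx) ⊗ y − x ⊗ (sy) holds in M ⊗_ℤ N. -/

import Mathlib

open TensorProduct Finset

private lemma mul_geom_aux {R : Type*} [Ring R] (e : R) (n : ℕ) :
    e * (∑ j ∈ Finset.range n, e ^ j) = (∑ j ∈ Finset.range (n + 1), e ^ j) - 1 := by
  rw [Finset.mul_sum, Finset.sum_range_succ']
  simp [pow_succ']

/-- **Lemma (claim 1).**  Let `p ≥ 2`, let `M`, `N` be abelian groups with endomorphisms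
`t_M`, `t_N` of order dividing `p`, and equip `M ⊗_ℤ N` with the diagonal action
`t = t_M ⊗ t_N`.  Writing `s = 1 + t + ⋯ + t^{p-1}` and `s_q = 1 + t + ⋯ + t^q`, for all
`x ∈ M` and `y ∈ N` one has
`(1 − t)( Σ_{k=0}^{p−2} ((s − s_k)x) ⊗ t^k y ) = (sx) ⊗ y − x ⊗ (sy)` in `M ⊗_ℤ N`. -/
theorem d_of_sum_smash_tensor
    (p : ℕ) (hp : 2 ≤ p)
    (M N : Type) [AddCommGroup M] [AddCommGroup N]
    (tM : Module.End ℤ M) (tN : Module.End ℤ N)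
    (htM : tM ^ p = 1) (htN : tN ^ p = 1)
    (x : M) (y : N) :
    (1 - TensorProduct.map tM tN)
        (∑ k ∈ range (p - 1),
          ((((∑ j ∈ range p, tM ^ j) - ∑ j ∈ range (k + 1), tM ^ j) x) ⊗ₜ[ℤ] ((tN ^ k) y)))
      =
      (((∑ j ∈ range p, tM ^ j) x) ⊗ₜ[ℤ] y) - (x ⊗ₜ[ℤ] ((∑ j ∈ range p, tN ^ j) y)) := by
  set S : Module.End ℤ M := ∑ j ∈ range p, tM ^ j with hS
  set F : ℕ → M ⊗[ℤ] N :=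
    fun k => ((S - ∑ j ∈ range (k + 1), tM ^ j) x) ⊗ₜ[ℤ] ((tN ^ k) y) with hF
  have hmulS : tM * S = S := by
    rw [hS, mul_geom_aux, Finset.sum_range_succ, htM]
    abel
  have key : ∀ k, TensorProduct.map tM tN (F k) = F (k + 1) + x ⊗ₜ[ℤ] ((tN ^ (k + 1)) y) := by
    intro k
    have h1 : tM ((S - ∑ j ∈ range (k + 1), tM ^ j) x)
        = ((S - ∑ j ∈ range (k + 2), tM ^ j) x) + x := by
      have h2 : tM * (S - ∑ j ∈ range (k + 1), tM ^ j)
          = (S - ∑ j ∈ range (k + 2), tM ^ j) + 1 := by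
        rw [mul_sub, hmulS, mul_geom_aux]
        abel
      calc tM ((S - ∑ j ∈ range (k + 1), tM ^ j) x)
          = (tM * (S - ∑ j ∈ range (k + 1), tM ^ j)) x := rfl
        _ = ((S - ∑ j ∈ range (k + 2), tM ^ j) + 1) x := by rw [h2]
        _ = ((S - ∑ j ∈ range (k + 2), tM ^ j) x) + x := by
            simp [LinearMap.add_apply]
    simp only [hF, TensorProduct.map_tmul, h1]
    have h3 : tN ((tN ^ k) y) = (tN ^ (k + 1)) y := by
      rw [pow_succ', Module.End.mul_apply]
    rw [h3, TensorProduct.add_tmul]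
  have hF0 : F 0 = ((S - 1) x) ⊗ₜ[ℤ] y := by
    simp [hF]
  have hFtop : F (p - 1) = 0 := by
    have h : p - 1 + 1 = p := by omega
    simp only [hF, h, ← hS, sub_self, LinearMap.zero_apply, TensorProduct.zero_tmul]
  rw [LinearMap.sub_apply, Module.End.one_apply, map_sum]
  calc (∑ k ∈ range (p - 1), F k) -
        ∑ k ∈ range (p - 1), TensorProduct.map tM tN (F k)
      = (∑ k ∈ range (p - 1), F k) -
        ∑ k ∈ range (p - 1), (F (k + 1) + x ⊗ₜ[ℤ] ((tN ^ (k + 1)) y)) := by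
        rw [Finset.sum_congr rfl fun k _ => key k]
    _ = (∑ k ∈ range (p - 1), (F k - F (k + 1))) -
        ∑ k ∈ range (p - 1), x ⊗ₜ[ℤ] ((tN ^ (k + 1)) y) := by
        rw [Finset.sum_add_distrib, Finset.sum_sub_distrib]; abel
    _ = (F 0 - F (p - 1)) - x ⊗ₜ[ℤ] (∑ k ∈ range (p - 1), (tN ^ (k + 1)) y) := by
        rw [Finset.sum_range_sub' F, TensorProduct.tmul_sum]
    _ = (((∑ j ∈ range p, tM ^ j) x) ⊗ₜ[ℤ] y) - (x ⊗ₜ[ℤ] ((∑ j ∈ range p, tN ^ j) y)) := by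
        rw [hF0, hFtop]
        have h4 : ∑ k ∈ range (p - 1), (tN ^ (k + 1)) y
            = ((∑ j ∈ range p, tN ^ j) y) - y := by
          have h5 : (∑ k ∈ range (p - 1), tN ^ (k + 1))
              = (∑ j ∈ range p, tN ^ j) - 1 := by
            have hp1 : p - 1 + 1 = p := by omega
            rw [← hp1, Finset.sum_range_succ']
            simp
          calc ∑ k ∈ range (p - 1), (tN ^ (k + 1)) y
              = (∑ k ∈ range (p - 1), tN ^ (k + 1)) y := by
                simp [LinearMap.sum_apply]
            _ = ((∑ j ∈ range p, tN ^ j) - 1) y := by rw [h5]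
            _ = ((∑ j ∈ range p, tN ^ j) y) - y := by
                simp [LinearMap.sub_apply]
        rw [h4, TensorProduct.tmul_sub]
        simp only [LinearMap.sub_apply, Module.End.one_apply, TensorProduct.sub_tmul]
        abel
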